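/- For every H ∈ (0,1), Γ(2H+1)·sin(πH) ≤ 2 (equivalently, the constant c_H = Γ(2H+1)sin(πH)/(2π) satisfies c_H ≤ 1/π). Moreover, for every H ∈ (1/4, 1/2], Γ(2H+1)·sin(πH) ≤ 1 (equivalently, c_H ≤ 1/(2π)). -/
import Mathlib


open Real Set

private lemma gamma_two' : Real.Gamma 2 = 1 := by
  rw [show (2:ℝ)=1+1 by norm_num, Real.Gamma_add_one one_ne_zero, Real.Gamma_one]; ring

private lemma gamma_three' : Real.Gamma 3 = 2 := by
  rw [show (3:ℝ)=2+1 by norm_num, Real.Gamma_add_one two_ne_zero, gamma_two']; ring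

/-- Uniform bounds for the spectral constant: `Γ(2H+1) sin(πH) ≤ 2` for all
`H ∈ (0,1)` (i.e. `c_H ≤ 1/π`), and `Γ(2H+1) sin(πH) ≤ 1` for all
`H ∈ (1/4, 1/2]` (i.e. `c_H ≤ 1/(2π)`). -/
theorem gamma_sin_bounds :
    (∀ H ∈ Set.Ioo (0 : ℝ) 1,
        Real.Gamma (2 * H + 1) * Real.sin (Real.pi * H) ≤ 2) ∧
    (∀ H ∈ Set.Ioc (1 / 4 : ℝ) (1 / 2),
        Real.Gamma (2 * H + 1) * Real.sin (Real.pi * H) ≤ 1) := by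
  have hconv := Real.convexOn_Gamma
  constructor
  · rintro H ⟨h0, h1⟩
    have hx : (2*H+1) ∈ segment ℝ (1:ℝ) 3 := by
      rw [segment_eq_Icc (by norm_num : (1:ℝ) ≤ 3)]
      constructor <;> nlinarith
    have hΓ : Real.Gamma (2*H+1) ≤ 2 := by
      have := hconv.le_on_segment (x := 1) (y := 3)
        (by norm_num : (1:ℝ) ∈ Ioi (0:ℝ)) (by norm_num : (3:ℝ) ∈ Ioi (0:ℝ)) hx
      simpa [Real.Gamma_one, gamma_three'] using this
    have hΓpos : 0 < Real.Gamma (2*H+1) := Real.Gamma_pos_of_pos (by nlinarith)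
    have hs1 : Real.sin (Real.pi * H) ≤ 1 := Real.sin_le_one _
    have hs0 : 0 ≤ Real.sin (Real.pi * H) := by
      apply Real.sin_nonneg_of_nonneg_of_le_pi
      · positivity
      · nlinarith [Real.pi_pos]
    nlinarith
  · rintro H ⟨h0, h1⟩
    have hx : (2*H+1) ∈ segment ℝ (1:ℝ) 2 := by
      rw [segment_eq_Icc (by norm_num : (1:ℝ) ≤ 2)]
      constructor <;> nlinarith
    have hΓ : Real.Gamma (2*H+1) ≤ 1 := by
      have := hconv.le_on_segment (x := 1) (y := 2)
        (by norm_num : (1:ℝ) ∈ Ioi (0:ℝ)) (by norm_num : (2:ℝ) ∈ Ioi (0:ℝ)) hx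
      simpa [Real.Gamma_one, gamma_two'] using this
    have hΓpos : 0 < Real.Gamma (2*H+1) := Real.Gamma_pos_of_pos (by nlinarith)
    have hs1 : Real.sin (Real.pi * H) ≤ 1 := Real.sin_le_one _
    have hs0 : 0 ≤ Real.sin (Real.pi * H) := by
      apply Real.sin_nonneg_of_nonneg_of_le_pi
      · positivity
      · nlinarith [Real.pi_pos]
    nlinarith
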